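/- arXiv:1901.06781 — 6 statements merged into one kernel-verified Lean document; each statement's English description precedes it below -/
import Mathlib

section
/- Let p = nk+1 be a prime with n = 2m even and k odd, and let H = {x^n : x ∈ 𝔽_p^×} be the multiplicative subgroup of 𝔽_p^× of index n. If p > n^4 + 5, then H is not sum-free: there exist x, y, z ∈ H with x + y = z. -/
open Pointwise

/-- The set of nonzero `n`-th power residues in `𝔽_p = ZMod p`. -/
def Hpow (p n : ℕ) : Set (ZMod p) := {x | ∃ u : (ZMod p)ˣ, (u : ZMod p) ^ n = x}

/-- If `p = n*k + 1` is prime with `n = 2m` even and `k` odd, and `p > n^4 + 5`, then the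
subgroup `H` of nonzero `n`-th power residues is not sum-free. -/
theorem stmt_0 (p n k m : ℕ) (hp : p.Prime) (hpnk : p = n * k + 1)
    (hn : n = 2 * m) (hm : 0 < m) (hk : Odd k) (hbig : p > n ^ 4 + 5) :
    ∃ x ∈ Hpow p n, ∃ y ∈ Hpow p n, ∃ z ∈ Hpow p n, x + y = z := by
  classical
  haveI : Fact p.Prime := ⟨hp⟩
  haveI : NeZero p := ⟨hp.pos.ne'⟩
  have hn2 : 2 ≤ n := by omega
  have hk1 : 1 ≤ k := by
    rcases Nat.eq_zero_or_pos k with h | h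
    · subst h; simp at hpnk; omega
    · exact h
  have hcard : Fintype.card (ZMod p) = p := ZMod.card p
  have hdvd : n ∣ Fintype.card (ZMod p) - 1 := ⟨k, by rw [hcard]; omega⟩
  have hnne : n ≠ 0 := by omega
  obtain ⟨χ₀, hχ₀⟩ := MulChar.exists_mulChar_orderOf (ZMod p)
    hdvd (Complex.isPrimitiveRoot_exp n hnne)
  have hpow1 : ∀ i : ℕ, χ₀ ^ i = 1 ↔ n ∣ i := by
    intro i
    rw [← hχ₀]
    exact orderOf_dvd_iff_pow_eq_one.symm
  -- membership lemma
  obtain ⟨g, hg⟩ := IsCyclic.exists_generator (α := (ZMod p)ˣ)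
  have hWpow : ∀ i : ℕ, (χ₀.toUnitHom g) ^ i = 1 ↔ n ∣ i := by
    intro i
    rw [← hpow1 i, MulChar.eq_iff hg (χ₀ ^ i) 1, MulChar.one_apply_coe, MulChar.pow_apply_coe,
      ← MulChar.coe_toUnitHom, ← Units.val_pow_eq_pow_val, ← Units.val_one (α := ℂ),
      ← Units.ext_iff]
  have horderW : orderOf (χ₀.toUnitHom g) = n := by
    have h1 : orderOf (χ₀.toUnitHom g) ∣ n := orderOf_dvd_of_pow_eq_one ((hWpow n).mpr dvd_rfl)
    have h2 : n ∣ orderOf (χ₀.toUnitHom g) := by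
      rcases Nat.eq_zero_or_pos (orderOf (χ₀.toUnitHom g)) with h | h
      · exact h ▸ dvd_zero n
      · exact (hWpow _).mp (pow_orderOf_eq_one _)
    exact Nat.dvd_antisymm h1 h2
  have hmem : ∀ a : ZMod p, IsUnit a → χ₀ a = 1 → a ∈ Hpow p n := by
    intro a ha h1
    obtain ⟨j, hj⟩ := Subgroup.mem_zpowers_iff.mp (hg ha.unit)
    have hval : χ₀ a = ((χ₀.toUnitHom g ^ j : ℂˣ) : ℂ) := by
      rw [← ha.unit_spec, ← hj, ← map_zpow, MulChar.coe_toUnitHom]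
    have hWj : (χ₀.toUnitHom g) ^ j = 1 := by
      apply Units.ext
      rw [← hval, h1, Units.val_one]
    have hdvdj : (n : ℤ) ∣ j := by
      rw [← horderW]
      exact orderOf_dvd_iff_zpow_eq_one.mpr hWj
    obtain ⟨t, ht⟩ := hdvdj
    refine ⟨g ^ t, ?_⟩
    have : a = ((g ^ j : (ZMod p)ˣ) : ZMod p) := by rw [hj, ha.unit_spec]
    rw [this, ht, mul_comm, zpow_mul, zpow_natCast, Units.val_pow_eq_pow_val]
  -- the indicator-type function
  set f : ZMod p → ℂ := fun a => ∑ i ∈ Finset.range n, (χ₀ ^ i) a with hf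
  have hf0 : ∀ a : ZMod p, f a ≠ 0 → IsUnit a ∧ χ₀ a = 1 := by
    intro a hfa
    have ha : IsUnit a := by
      by_contra hu
      apply hfa
      apply Finset.sum_eq_zero
      intro i _
      exact MulChar.map_nonunit _ hu
    refine ⟨ha, ?_⟩
    by_contra h1
    apply hfa
    have key : ∀ i ∈ Finset.range n, (χ₀ ^ i) a = (χ₀ a) ^ i := by
      intro i _
      conv_lhs => rw [← ha.unit_spec]
      rw [MulChar.pow_apply_coe, ha.unit_spec]
    rw [hf]
    simp only []
    rw [Finset.sum_congr rfl key, geom_sum_eq h1]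
    have : (χ₀ a) ^ n = 1 := by
      conv_lhs => rw [← ha.unit_spec]
      rw [← MulChar.pow_apply_coe, (hpow1 n).mpr dvd_rfl, MulChar.one_apply_coe]
    rw [this, sub_self, zero_div]
  by_contra hcon
  push_neg at hcon
  -- key sums
  set T : ℕ → ℕ → ℂ := fun i j => ∑ a : ZMod p, (χ₀ ^ i) a * (χ₀ ^ j) (1 + a) with hTdef
  set S : ℂ := ∑ a : ZMod p, f a * f (1 + a) with hS
  -- S = 0 since no solutions
  have hS0 : S = 0 := by
    apply Finset.sum_eq_zero
    intro a _
    by_contra hne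
    obtain ⟨hne1, hne2⟩ := mul_ne_zero_iff.mp hne
    obtain ⟨ha, h1a⟩ := hf0 a hne1
    obtain ⟨hb, h1b⟩ := hf0 (1 + a) hne2
    have h1H : (1 : ZMod p) ∈ Hpow p n := ⟨1, by simp⟩
    exact hcon 1 h1H a (hmem a ha h1a) (1 + a) (hmem _ hb h1b) rfl
  -- expand S as a double sum of Jacobi-type sums
  have hS1 : S = ∑ i ∈ Finset.range n, ∑ j ∈ Finset.range n, T i j := by
    rw [hS]
    simp only [hf, Finset.sum_mul_sum]
    rw [Finset.sum_comm]
    exact Finset.sum_congr rfl fun i _ => Finset.sum_comm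
  -- relation to Jacobi sums
  have hT : ∀ i j : ℕ, jacobiSum (χ₀ ^ i) (χ₀ ^ j) = (χ₀ ^ i) (-1) * T i j := by
    intro i j
    rw [hTdef]
    simp only []
    rw [Finset.mul_sum, jacobiSum]
    rw [← Equiv.sum_comp (Equiv.neg (ZMod p)) (fun x => (χ₀ ^ i) x * (χ₀ ^ j) (1 - x))]
    apply Finset.sum_congr rfl
    intro a _
    simp only [Equiv.neg_apply, sub_neg_eq_add]
    have : (χ₀ ^ i) (-a) = (χ₀ ^ i) (-1) * (χ₀ ^ i) a := by
      rw [← map_mul]; ring_nf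
    rw [this]; ring
  have hnorm_neg_one : ∀ i : ℕ, ‖(χ₀ ^ i) (-1)‖ = 1 := by
    intro i
    have h2 : (χ₀ ^ i) (-1) * (χ₀ ^ i) (-1) = 1 := by
      rw [← map_mul]
      norm_num
    have h3 : ‖(χ₀ ^ i) (-1)‖ * ‖(χ₀ ^ i) (-1)‖ = 1 := by
      rw [← norm_mul, h2, norm_one]
    rcases mul_self_eq_one_iff.mp h3 with h | h
    · exact h
    · linarith [norm_nonneg ((χ₀ ^ i) (-1))]
  -- main term
  have h00 : T 0 0 = (p : ℂ) - 2 := by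
    have := hT 0 0
    rw [pow_zero, jacobiSum_one_one, MulChar.one_apply (isUnit_one.neg), one_mul, hcard] at this
    exact this.symm
  -- norm bound on Jacobi sums
  have hchar : ringChar ℂ ≠ ringChar (ZMod p) := by
    rw [ringChar.eq_zero, ZMod.ringChar_zmod_n]
    exact hp.ne_zero.symm
  have hone_le_sqrt : (1 : ℝ) ≤ Real.sqrt p := by
    rw [Real.one_le_sqrt]
    exact_mod_cast hp.one_lt.le
  have hJb : ∀ i j : ℕ, i < n → j < n → (i, j) ≠ (0, 0) →
      ‖jacobiSum (χ₀ ^ i) (χ₀ ^ j)‖ ≤ Real.sqrt p := by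
    intro i j hi hj hij
    have hne1 : ∀ l : ℕ, l < n → l ≠ 0 → χ₀ ^ l ≠ 1 := by
      intro l hl hl0 h
      exact hl0 (Nat.eq_zero_of_dvd_of_lt ((hpow1 l).mp h) hl)
    rcases Nat.eq_zero_or_pos i with hi0 | hi0
    · -- i = 0, so j ≠ 0
      have hj0 : j ≠ 0 := by rintro rfl; exact hij (by rw [hi0])
      rw [hi0, pow_zero, jacobiSum_one_nontrivial (hne1 j hj hj0), norm_neg, norm_one]
      exact hone_le_sqrt
    rcases Nat.eq_zero_or_pos j with hj0 | hj0
    · rw [hj0, pow_zero, jacobiSum_comm, jacobiSum_one_nontrivial (hne1 i hi hi0.ne'),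
        norm_neg, norm_one]
      exact hone_le_sqrt
    have hχ : χ₀ ^ i ≠ 1 := hne1 i hi hi0.ne'
    have hψ : χ₀ ^ j ≠ 1 := hne1 j hj hj0.ne'
    by_cases hχψ : χ₀ ^ i * χ₀ ^ j = 1
    · have : χ₀ ^ j = (χ₀ ^ i)⁻¹ := by
        rw [eq_inv_iff_mul_eq_one, mul_comm]
        exact hχψ
      rw [this, jacobiSum_nontrivial_inv hχ, norm_neg, hnorm_neg_one]
      exact hone_le_sqrt
    · have hmul := jacobiSum_mul_jacobiSum_inv hchar hχ hψ hχψ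
      have hstar : jacobiSum (χ₀ ^ i)⁻¹ (χ₀ ^ j)⁻¹ = starRingEnd ℂ (jacobiSum (χ₀ ^ i) (χ₀ ^ j)) := by
        rw [jacobiSum, jacobiSum, map_sum]
        apply Finset.sum_congr rfl
        intro x _
        rw [map_mul]
        rw [← MulChar.star_apply' (χ₀ ^ i) x, ← MulChar.star_apply' (χ₀ ^ j) (1 - x)]
        rfl
      rw [hstar, Complex.mul_conj] at hmul
      have hnsq : Complex.normSq (jacobiSum (χ₀ ^ i) (χ₀ ^ j)) = (p : ℝ) := by
        have : ((Complex.normSq (jacobiSum (χ₀ ^ i) (χ₀ ^ j)) : ℝ) : ℂ) = ((p : ℝ) : ℂ) := by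
          rw [hmul, hcard]; push_cast; ring
        exact_mod_cast this
      rw [Complex.norm_def, hnsq]
  -- norms of T
  have hTb : ∀ i j : ℕ, i < n → j < n → (i, j) ≠ (0, 0) → ‖T i j‖ ≤ Real.sqrt p := by
    intro i j hi hj hij
    have h1 : ‖jacobiSum (χ₀ ^ i) (χ₀ ^ j)‖ = ‖T i j‖ := by
      rw [hT i j, norm_mul, hnorm_neg_one, one_mul]
    rw [← h1]
    exact hJb i j hi hj hij
  -- assemble
  set P : Finset (ℕ × ℕ) := Finset.range n ×ˢ Finset.range n with hP
  have hS2 : S = ∑ q ∈ P, T q.1 q.2 := by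
    rw [hS1, hP, Finset.sum_product]
  have hmemP : ((0, 0) : ℕ × ℕ) ∈ P := by
    rw [hP, Finset.mem_product]
    constructor <;> · rw [Finset.mem_range]; omega
  have hS3 : S - ((p : ℂ) - 2) = ∑ q ∈ P.erase (0, 0), T q.1 q.2 := by
    rw [hS2, ← Finset.add_sum_erase P _ hmemP, h00]
    ring
  have hbound : ‖S - ((p : ℂ) - 2)‖ ≤ ((n * n - 1 : ℕ) : ℝ) * Real.sqrt p := by
    rw [hS3]
    calc ‖∑ q ∈ P.erase (0, 0), T q.1 q.2‖
        ≤ ∑ q ∈ P.erase (0, 0), ‖T q.1 q.2‖ := norm_sum_le _ _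
      _ ≤ ∑ _q ∈ P.erase (0, 0), Real.sqrt p := by
          apply Finset.sum_le_sum
          intro q hq
          rw [Finset.mem_erase] at hq
          obtain ⟨hq1, hq2⟩ := hq
          rw [hP, Finset.mem_product, Finset.mem_range, Finset.mem_range] at hq2
          exact hTb q.1 q.2 hq2.1 hq2.2 hq1
      _ = ((n * n - 1 : ℕ) : ℝ) * Real.sqrt p := by
          rw [Finset.sum_const, Finset.card_erase_of_mem hmemP, hP, Finset.card_product,
            Finset.card_range, nsmul_eq_mul]
  -- numeric contradiction
  rw [hS0, zero_sub, norm_neg] at hbound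
  have hnormp : ‖(p : ℂ) - 2‖ = (p : ℝ) - 2 := by
    have h2 : ((p : ℂ) - 2) = (((p : ℝ) - 2 : ℝ) : ℂ) := by push_cast; ring
    have hple : (2 : ℝ) ≤ (p : ℝ) := by exact_mod_cast hp.two_le
    rw [h2, Complex.norm_real, Real.norm_eq_abs]
    exact abs_of_nonneg (by linarith)
  rw [hnormp] at hbound
  -- now show (p:ℝ) - 2 > (n*n-1) * sqrt p
  set s : ℝ := Real.sqrt p with hsdef
  have hs0 : 0 ≤ s := Real.sqrt_nonneg _
  have hs2 : s ^ 2 = (p : ℝ) := Real.sq_sqrt (by positivity)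
  have hpge : ((n : ℝ)) ^ 4 + 6 ≤ (p : ℝ) := by
    have : n ^ 4 + 6 ≤ p := by omega
    exact_mod_cast this
  have hnR : (2 : ℝ) ≤ (n : ℝ) := by exact_mod_cast hn2
  have hcast : ((n * n - 1 : ℕ) : ℝ) = (n : ℝ) * n - 1 := by
    have : 1 ≤ n * n := Nat.one_le_iff_ne_zero.mpr (Nat.mul_ne_zero (by omega) (by omega))
    push_cast [Nat.cast_sub this]
    ring
  rw [hcast] at hbound
  have hsn : (n : ℝ) * n < s := by
    apply lt_of_pow_lt_pow_left₀ 2 hs0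
    calc ((n : ℝ) * n) ^ 2 = (n : ℝ) ^ 4 := by ring
      _ < (p : ℝ) := by linarith
      _ = s ^ 2 := hs2.symm
  have h44 : (2 : ℝ) * 2 ≤ (n : ℝ) * n := mul_le_mul hnR hnR (by norm_num) (by linarith)
  have hsge : (2 : ℝ) ≤ s := by linarith
  have hss : s * s = (p : ℝ) := by rw [← hs2]; ring
  have h5 : ((n : ℝ) * n - 1) * s < (s - 1) * s :=
    mul_lt_mul_of_pos_right (by linarith) (by linarith)
  have h6 : (s - 1) * s = (p : ℝ) - s := by rw [sub_one_mul, hss]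
  linarith
end

section
/- Let p = nk+1 be a prime with n = 2m even and k odd, and let H = {x^n : x ∈ 𝔽_p^×} be the multiplicative subgroup of 𝔽_p^× of index n. If p > n^4 + 5, then there exist x, y, z ∈ H with x + y = −z, i.e., x + y + z = 0 in 𝔽_p. -/
open Pointwise

section aux

variable {p : ℕ} [Fact p.Prime]

private lemma mulChar_unit_norm (χ : MulChar (ZMod p) ℂ) {x : ZMod p} (hx : IsUnit x) :
    ‖χ x‖ = 1 := by
  have hN : Fintype.card (ZMod p)ˣ ≠ 0 := Fintype.card_ne_zero
  have hpow : (χ x) ^ Fintype.card (ZMod p)ˣ = 1 := by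
    rw [← MulChar.pow_apply' χ hN, MulChar.pow_card_eq_one, MulChar.one_apply hx]
  exact Complex.norm_eq_one_of_pow_eq_one hpow hN

private lemma mulChar_conj (χ : MulChar (ZMod p) ℂ) (x : ZMod p) :
    (starRingEnd ℂ) (χ x) = χ⁻¹ x := by
  by_cases hx : IsUnit x
  · rw [MulChar.inv_apply_eq_inv', ← Complex.inv_eq_conj (mulChar_unit_norm χ hx)]
  · rw [MulChar.map_nonunit χ hx, MulChar.map_nonunit _ hx, map_zero]

private lemma jacobi_norm {χ φ : MulChar (ZMod p) ℂ}
    (hχ : χ ≠ 1) (hφ : φ ≠ 1) (hχφ : χ * φ ≠ 1) :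
    ‖jacobiSum χ φ‖ = Real.sqrt p := by
  have hchar : ringChar ℂ ≠ ringChar (ZMod p) := by
    rw [ringChar.eq_zero, ZMod.ringChar_zmod_n]
    exact fun h => (Fact.out : p.Prime).ne_zero h.symm
  have hJ := jacobiSum_mul_jacobiSum_inv hchar hχ hφ hχφ
  have hconj : jacobiSum χ⁻¹ φ⁻¹ = (starRingEnd ℂ) (jacobiSum χ φ) := by
    rw [jacobiSum, jacobiSum, map_sum]
    exact Finset.sum_congr rfl fun x _ => by rw [map_mul, mulChar_conj, mulChar_conj]
  rw [hconj, Complex.mul_conj, ZMod.card] at hJ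
  have hsq : Complex.normSq (jacobiSum χ φ) = p := by exact_mod_cast hJ
  rw [Complex.norm_def, hsq]

end aux

/-- If `p = n*k + 1` is prime with `n = 2m` even and `k` odd, and `p > n^4 + 5`, then there
exist `x, y, z` in the subgroup `H` of nonzero `n`-th power residues with `x + y = -z`,
i.e. `x + y + z = 0`. -/
theorem stmt_1 (p n k m : ℕ) (hp : p.Prime) (hpnk : p = n * k + 1)
    (hn : n = 2 * m) (hm : 0 < m) (hk : Odd k) (hbig : p > n ^ 4 + 5) :
    ∃ x ∈ Hpow p n, ∃ y ∈ Hpow p n, ∃ z ∈ Hpow p n, x + y = -z := by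
  classical
  haveI : Fact p.Prime := ⟨hp⟩
  have hn2 : 2 ≤ n := by omega
  have hn0 : n ≠ 0 := by omega
  have hk0 : k ≠ 0 := by rintro rfl; simp at hpnk; omega
  have hp1 : p - 1 = n * k := by omega
  have hp22 : 22 ≤ p := by
    have h16 : 2 ^ 4 ≤ n ^ 4 := Nat.pow_le_pow_left hn2 4
    omega
  -- a multiplicative character of order n
  have hdvd : n ∣ Fintype.card (ZMod p) - 1 := by
    rw [ZMod.card, hp1]; exact ⟨k, rfl⟩
  obtain ⟨χ, hχord⟩ :=
    MulChar.exists_mulChar_orderOf (ZMod p) hdvd (Complex.isPrimitiveRoot_exp n hn0)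
  have hχn : χ ^ n = 1 := hχord ▸ pow_orderOf_eq_one χ
  -- χ x = 1 for a unit x implies x is an n-th power
  have hker : ∀ x : ZMod p, IsUnit x → χ x = 1 → x ∈ Hpow p n := by
    intro x hx h1
    obtain ⟨g, hg⟩ := IsCyclic.exists_generator (α := (ZMod p)ˣ)
    set z : ℂ := χ (g : ZMod p) with hz
    have hzn : z ^ n = 1 := by
      rw [hz, ← MulChar.pow_apply' χ hn0, hχn, MulChar.one_apply g.isUnit]
    have hzfin : IsOfFinOrder z := isOfFinOrder_iff_pow_eq_one.mpr ⟨n, by omega, hzn⟩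
    have hd0 : orderOf z ≠ 0 := hzfin.orderOf_pos.ne'
    have hordz : orderOf z = n := by
      have h1' : orderOf z ∣ n := orderOf_dvd_of_pow_eq_one hzn
      have h2' : n ∣ orderOf z := by
        rw [← hχord]
        apply orderOf_dvd_of_pow_eq_one
        apply MulChar.ext
        intro u
        obtain ⟨b, hb⟩ := (isOfFinOrder_of_finite g).mem_powers_iff_mem_zpowers.mpr (hg u)
        rw [MulChar.one_apply_coe, MulChar.pow_apply' _ hd0, ← hb]
        push_cast [map_pow]
        rw [← hz, ← pow_mul, mul_comm, pow_mul, pow_orderOf_eq_one, one_pow]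
      exact Nat.dvd_antisymm h1' h2'
    obtain ⟨a, ha⟩ := (isOfFinOrder_of_finite g).mem_powers_iff_mem_zpowers.mpr (hg hx.unit)
    have hxa : x = (g : ZMod p) ^ a := by
      rw [← hx.unit_spec, ← ha]; push_cast; ring
    have hza : z ^ a = 1 := by
      rw [hz, ← map_pow, ← hxa, h1]
    obtain ⟨b, hb⟩ := (orderOf_dvd_iff_pow_eq_one.mpr hza : orderOf z ∣ a)
    refine ⟨g ^ b, ?_⟩
    rw [hxa, hb, hordz]
    push_cast
    rw [← pow_mul, mul_comm]
  -- -1 is not an n-th power since k is odd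
  have hm1 : (-1 : ZMod p) ∉ Hpow p n := by
    rintro ⟨u, hu⟩
    have h1 : ((-1 : ZMod p)) ^ k = 1 := by
      rw [← hu, ← pow_mul, ← hp1]
      exact ZMod.pow_card_sub_one_eq_one (Units.ne_zero u)
    rw [hk.neg_one_pow] at h1
    have h2 : ((2 : ℕ) : ZMod p) = 0 := by push_cast; linear_combination -h1
    have := (ZMod.natCast_eq_zero_iff 2 p).mp h2
    have := Nat.le_of_dvd (by norm_num) this
    omega
  -- the indicator-type sum f
  set f : ZMod p → ℂ := fun t => ∑ j ∈ Finset.range n, (χ ^ j) t with hf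
  have hf0 : f 0 = 0 := by
    apply Finset.sum_eq_zero
    intro j _
    exact MulChar.map_nonunit _ not_isUnit_zero
  have hfunit : ∀ t : ZMod p, t ≠ 0 → f t = ∑ j ∈ Finset.range n, (χ t) ^ j := by
    intro t ht
    apply Finset.sum_congr rfl
    intro j _
    rcases Nat.eq_zero_or_pos j with hj | hj
    · subst hj
      rw [pow_zero, pow_zero, MulChar.one_apply (isUnit_iff_ne_zero.mpr ht)]
    · exact MulChar.pow_apply' χ hj.ne' t
  have hfH : ∀ t ∈ Hpow p n, f t = n := by
    rintro t ⟨u, hu⟩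
    have ht0 : t ≠ 0 := by
      rw [← hu]
      exact pow_ne_zero _ (Units.ne_zero u)
    have hχt : χ t = 1 := by
      rw [← hu, map_pow, ← MulChar.pow_apply' χ hn0, hχn, MulChar.one_apply u.isUnit]
    rw [hfunit t ht0, hχt]
    simp
  have hfnot : ∀ t : ZMod p, t ∉ Hpow p n → f t = 0 := by
    intro t ht
    by_cases ht0 : t = 0
    · subst ht0; exact hf0
    · rw [hfunit t ht0]
      have hz1 : χ t ≠ 1 := fun h => ht (hker t (isUnit_iff_ne_zero.mpr ht0) h)
      have hzn : (χ t) ^ n = 1 := by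
        rw [← MulChar.pow_apply' χ hn0, hχn, MulChar.one_apply (isUnit_iff_ne_zero.mpr ht0)]
      have hgm := geom_sum_mul (χ t) n
      rw [hzn, sub_self] at hgm
      exact (mul_eq_zero.mp hgm).resolve_right (sub_ne_zero.mpr hz1)
  -- the main sum
  set S : ℂ := ∑ s : ZMod p, f s * f (-1 - s) with hS
  set P : Finset (ℕ × ℕ) := Finset.range n ×ˢ Finset.range n with hP
  set T : ℕ × ℕ → ℂ :=
    fun q => (χ ^ q.1) (-1) * (χ ^ q.2) (-1) * jacobiSum (χ ^ q.1) (χ ^ q.2) with hT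
  have hterm : ∀ i j : ℕ, (∑ s : ZMod p, (χ ^ i) s * (χ ^ j) (-1 - s)) = T (i, j) := by
    intro i j
    rw [← Equiv.sum_comp (Equiv.neg (ZMod p)) (fun s => (χ ^ i) s * (χ ^ j) (-1 - s))]
    simp only [hT, jacobiSum, Finset.mul_sum]
    apply Finset.sum_congr rfl
    intro x _
    have h1 : ((Equiv.neg (ZMod p)) x : ZMod p) = -1 * x := by
      rw [Equiv.neg_apply]; ring
    rw [h1]
    have h2 : (-1 - -1 * x : ZMod p) = -1 * (1 - x) := by ring
    rw [h2, map_mul, map_mul]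
    ring
  have hSsum : S = ∑ q ∈ P, T q := by
    calc S = ∑ s : ZMod p, ∑ i ∈ Finset.range n, ∑ j ∈ Finset.range n,
          (χ ^ i) s * (χ ^ j) (-1 - s) := by
          apply Finset.sum_congr rfl
          intro s _
          exact Finset.sum_mul_sum _ _ _ _
      _ = ∑ i ∈ Finset.range n, ∑ s : ZMod p, ∑ j ∈ Finset.range n,
          (χ ^ i) s * (χ ^ j) (-1 - s) := Finset.sum_comm
      _ = ∑ i ∈ Finset.range n, ∑ j ∈ Finset.range n, ∑ s : ZMod p,
          (χ ^ i) s * (χ ^ j) (-1 - s) :=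
          Finset.sum_congr rfl fun i _ => Finset.sum_comm
      _ = ∑ i ∈ Finset.range n, ∑ j ∈ Finset.range n, T (i, j) :=
          Finset.sum_congr rfl fun i _ => Finset.sum_congr rfl fun j _ => hterm i j
      _ = ∑ q ∈ P, T q := by rw [Finset.sum_product]
  have hT00 : T (0, 0) = (p : ℂ) - 2 := by
    have h1 : IsUnit (-1 : ZMod p) := isUnit_one.neg
    simp only [hT, pow_zero, MulChar.one_apply h1, one_mul]
    rw [jacobiSum_one_one, ZMod.card]
  have hmem : ((0 : ℕ), (0 : ℕ)) ∈ P := by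
    simp [hP, Finset.mem_product]
    omega
  -- bound on the nontrivial terms
  have hsp1 : (1 : ℝ) ≤ Real.sqrt p := by
    have := Real.sqrt_le_sqrt (show (1 : ℝ) ≤ p by exact_mod_cast by omega)
    rwa [Real.sqrt_one] at this
  have hpow_ne : ∀ i : ℕ, i ≠ 0 → i < n → χ ^ i ≠ 1 := by
    intro i hi0 hilt
    exact pow_ne_one_of_lt_orderOf hi0 (by rw [hχord]; exact hilt)
  have hTbound : ∀ q ∈ P.erase (0, 0), ‖T q‖ ≤ Real.sqrt p := by
    rintro ⟨i, j⟩ hq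
    have hq' := Finset.mem_of_mem_erase hq
    rw [hP, Finset.mem_product, Finset.mem_range, Finset.mem_range] at hq'
    have hne := Finset.ne_of_mem_erase hq
    have hu1 : IsUnit (-1 : ZMod p) := isUnit_one.neg
    have hnormT : ‖T (i, j)‖ = ‖jacobiSum (χ ^ i) (χ ^ j)‖ := by
      rw [hT]
      simp only [norm_mul]
      rw [mulChar_unit_norm _ hu1, mulChar_unit_norm _ hu1, one_mul, one_mul]
    rw [hnormT]
    rcases Nat.eq_zero_or_pos i with hi | hi
    · subst hi
      have hj0 : j ≠ 0 := by
        intro h; exact hne (by rw [h])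
      rw [pow_zero, jacobiSum_one_nontrivial (hpow_ne j hj0 hq'.2)]
      simpa using hsp1
    rcases Nat.eq_zero_or_pos j with hj | hj
    · subst hj
      rw [pow_zero, jacobiSum_comm, jacobiSum_one_nontrivial (hpow_ne i hi.ne' hq'.1)]
      simpa using hsp1
    by_cases hij : χ ^ i * χ ^ j = 1
    · have hji : χ ^ j = (χ ^ i)⁻¹ := eq_inv_of_mul_eq_one_right hij
      rw [hji, jacobiSum_nontrivial_inv (hpow_ne i hi.ne' hq'.1), norm_neg,
        mulChar_unit_norm _ hu1]
      exact hsp1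
    · rw [jacobi_norm (hpow_ne i hi.ne' hq'.1) (hpow_ne j hj.ne' hq'.2) hij]
  -- the error estimate
  have herase : ∑ q ∈ P.erase (0, 0), T q = S - ((p : ℂ) - 2) := by
    rw [Finset.sum_erase_eq_sub hmem, hT00, ← hSsum]
  have hcard : (P.erase (0, 0)).card = n * n - 1 := by
    rw [Finset.card_erase_of_mem hmem, hP, Finset.card_product, Finset.card_range]
  have hbound : ‖S - ((p : ℂ) - 2)‖ ≤ ((n * n - 1 : ℕ) : ℝ) * Real.sqrt p := by
    rw [← herase]
    calc ‖∑ q ∈ P.erase (0, 0), T q‖ ≤ ∑ q ∈ P.erase (0, 0), ‖T q‖ := norm_sum_le _ _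
      _ ≤ (P.erase (0, 0)).card • Real.sqrt p := Finset.sum_le_card_nsmul _ _ _ hTbound
      _ = ((n * n - 1 : ℕ) : ℝ) * Real.sqrt p := by
          rw [hcard, nsmul_eq_mul]
  -- numeric inequality
  have hnum : ((n * n - 1 : ℕ) : ℝ) * Real.sqrt p < (p : ℝ) - 2 := by
    set r : ℝ := Real.sqrt p with hr
    have hr0 : 0 ≤ r := Real.sqrt_nonneg _
    have hrr : r * r = p := Real.mul_self_sqrt (by positivity)
    have hrn : ((n : ℝ)) ^ 2 < r := by
      rw [hr, Real.lt_sqrt (by positivity)]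
      have : ((n ^ 4 + 5 : ℕ) : ℝ) < p := by exact_mod_cast hbig
      push_cast at this
      nlinarith
    have hcast : ((n * n - 1 : ℕ) : ℝ) = (n : ℝ) * n - 1 := by
      have h1 : 1 ≤ n * n := by nlinarith
      push_cast [Nat.cast_sub h1]
      ring
    rw [hcast]
    have hp22' : (22 : ℝ) ≤ p := by exact_mod_cast hp22
    nlinarith [mul_pos (sub_pos.mpr hrn) (lt_of_lt_of_le (by norm_num : (0:ℝ) < 1) hsp1),
      sq_nonneg (r - 5), sq_nonneg ((n : ℝ) - 2)]
  -- hence S ≠ 0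
  have hS0 : S ≠ 0 := by
    intro h0
    rw [h0, zero_sub, norm_neg] at hbound
    have : ‖(p : ℂ) - 2‖ = (p : ℝ) - 2 := by
      have h2 : ((p : ℂ) - 2) = (((p : ℝ) - 2 : ℝ) : ℂ) := by push_cast; ring
      rw [h2, Complex.norm_real, Real.norm_eq_abs, abs_of_nonneg (by
        have h22 : (22:ℝ) ≤ p := by exact_mod_cast hp22
        linarith)]
    rw [this] at hbound
    linarith
  -- extract a solution
  obtain ⟨s, _, hs⟩ := Finset.exists_ne_zero_of_sum_ne_zero (hS ▸ hS0)
  have hs1 : s ∈ Hpow p n := by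
    by_contra h
    rw [hfnot s h, zero_mul] at hs
    exact hs rfl
  have hs2 : (-1 - s) ∈ Hpow p n := by
    by_contra h
    rw [hfnot _ h, mul_zero] at hs
    exact hs rfl
  exact ⟨1, ⟨1, one_pow n⟩, s, hs1, -1 - s, hs2, by ring⟩
end

section
/- (Triangle symmetry) Suppose k = (p−1)/n is odd. Then for all integers i, j, ℓ: X_ℓ ⊆ X_i + X_j if and only if X_{i+m} ⊆ X_j + X_{ℓ+m}. -/
open Pointwise

/-- The coset `X_i = g^i · H` of the subgroup of `n`-th power residues. -/
noncomputable def Xc (p n : ℕ) [Fact p.Prime] (g : ZMod p) (i : ℤ) : Set (ZMod p) :=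
  g ^ i • Hpow p n

/-- Triangle symmetry: if `k = (p-1)/n` is odd, then
`X_ℓ ⊆ X_i + X_j` iff `X_{i+m} ⊆ X_j + X_{ℓ+m}`. -/
theorem stmt_5 (p n m k : ℕ) [Fact p.Prime] (hn : n = 2 * m) (hm : 0 < m)
    (hdvd : n ∣ p - 1) (hk : k = (p - 1) / n) (hkodd : Odd k)
    (g : ZMod p) (hg : IsPrimitiveRoot g (p - 1)) :
    ∀ i j l : ℤ,
      Xc p n g l ⊆ Xc p n g i + Xc p n g j ↔
        Xc p n g (i + m) ⊆ Xc p n g j + Xc p n g (l + m) := by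
  have hp2 : 2 ≤ p := (Fact.out : p.Prime).two_le
  have hp1 : 0 < p - 1 := by omega
  have hg1 : g ^ (p - 1) = 1 := hg.pow_eq_one
  have hg0 : g ≠ 0 := by
    intro h
    rw [h, zero_pow (by omega)] at hg1
    exact zero_ne_one hg1
  have hnk : p - 1 = n * k := by
    rw [hk]; exact (Nat.mul_div_cancel' hdvd).symm
  have hk0 : k ≠ 0 := by rintro rfl; omega
  -- basic facts about H
  have Hone : (1 : ZMod p) ∈ Hpow p n := ⟨1, by simp⟩
  have Hne : ∀ a ∈ Hpow p n, a ≠ 0 := by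
    rintro a ⟨u, rfl⟩
    exact pow_ne_zero _ u.ne_zero
  have Hmul : ∀ a ∈ Hpow p n, ∀ b ∈ Hpow p n, a * b ∈ Hpow p n := by
    rintro a ⟨u, rfl⟩ b ⟨v, rfl⟩
    exact ⟨u * v, by push_cast; rw [mul_pow]⟩
  have Hinv : ∀ a ∈ Hpow p n, a⁻¹ ∈ Hpow p n := by
    rintro a ⟨u, rfl⟩
    exact ⟨u⁻¹, by rw [Units.val_inv_eq_inv_val, inv_pow]⟩
  -- membership in Xc
  have memXc : ∀ (s : ℤ) (x : ZMod p),
      x ∈ Xc p n g s ↔ ∃ h ∈ Hpow p n, x = g ^ s * h := by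
    intro s x
    constructor
    · rintro ⟨h, hh, rfl⟩
      exact ⟨h, hh, rfl⟩
    · rintro ⟨h, hh, rfl⟩
      exact ⟨h, hh, rfl⟩
  -- g^n ∈ H
  set G : (ZMod p)ˣ := Units.mk0 g hg0 with hG
  have hGv : (G : ZMod p) = g := rfl
  have hgpow : ∀ t : ℕ, g ^ (n * t) ∈ Hpow p n := by
    intro t
    exact ⟨G ^ t, by rw [Units.val_pow_eq_pow_val, hGv, ← pow_mul, mul_comm]⟩
  -- -1 = g^m * h0 for some h0 ∈ H
  obtain ⟨t, ht⟩ := hkodd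
  have horder : orderOf g = p - 1 := (hg.eq_orderOf).symm
  have hmk1 : g ^ (m * k) ≠ 1 := by
    intro h
    have := orderOf_dvd_of_pow_eq_one h
    rw [horder] at this
    have hle := Nat.le_of_dvd (by positivity) this
    have he : p - 1 = 2 * (m * k) := by rw [hnk, hn]; ring
    have hmk0 : 0 < m * k := Nat.mul_pos hm (Nat.pos_of_ne_zero hk0)
    omega
  have hmksq : g ^ (m * k) * g ^ (m * k) = 1 := by
    rw [← pow_add, ← two_mul, ← mul_assoc, ← hn, ← hnk, hg1]
  have hmkneg : g ^ (m * k) = -1 := by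
    rcases mul_self_eq_one_iff.mp hmksq with h | h
    · exact absurd h hmk1
    · exact h
  have hneg : ∃ h0 ∈ Hpow p n, g ^ m * h0 = -1 := by
    refine ⟨g ^ (n * t), hgpow t, ?_⟩
    rw [← pow_add, ← hmkneg]
    congr 1
    rw [ht, hn]; ring
  obtain ⟨h0, hh0, hh0eq⟩ := hneg
  have hh0ne : h0 ≠ 0 := Hne _ hh0
  -- zpow arithmetic
  have zsplit : ∀ s : ℤ, g ^ (s + (m : ℤ)) = g ^ s * g ^ m := by
    intro s
    rw [zpow_add₀ hg0, zpow_natCast]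
  -- sums of cosets are H-stable
  have sum_stable : ∀ (a b : ℤ) (x : ZMod p), x ∈ Xc p n g a + Xc p n g b →
      ∀ h ∈ Hpow p n, x * h ∈ Xc p n g a + Xc p n g b := by
    intro a b x hx h hh
    rw [Set.mem_add] at hx ⊢
    obtain ⟨u, hu, v, hv, huv⟩ := hx
    obtain ⟨hu', hhu, rfl⟩ := (memXc a u).mp hu
    obtain ⟨hv', hhv, rfl⟩ := (memXc b v).mp hv
    refine ⟨g ^ a * (hu' * h), (memXc _ _).mpr ⟨hu' * h, Hmul _ hhu _ hh, by ring⟩,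
      g ^ b * (hv' * h), (memXc _ _).mpr ⟨hv' * h, Hmul _ hhv _ hh, by ring⟩, ?_⟩
    rw [← huv]; ring
  -- subset criterion
  have subset_iff : ∀ a b c : ℤ,
      (Xc p n g c ⊆ Xc p n g a + Xc p n g b ↔ g ^ c ∈ Xc p n g a + Xc p n g b) := by
    intro a b c
    constructor
    · intro hsub
      exact hsub ((memXc c _).mpr ⟨1, Hone, by rw [mul_one]⟩)
    · intro hmem x hx
      obtain ⟨h, hh, rfl⟩ := (memXc c x).mp hx
      exact sum_stable _ _ _ hmem h hh
  -- the one-directional key lemma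
  have key : ∀ i j l : ℤ, Xc p n g l ⊆ Xc p n g i + Xc p n g j →
      Xc p n g (i + (m : ℤ)) ⊆ Xc p n g j + Xc p n g (l + (m : ℤ)) := by
    intro i j l hsub
    rw [subset_iff] at hsub ⊢
    rw [Set.mem_add] at hsub ⊢
    obtain ⟨x, hx, y, hy, hxy⟩ := hsub
    obtain ⟨h1, hh1, rfl⟩ := (memXc i x).mp hx
    obtain ⟨h2, hh2, rfl⟩ := (memXc j y).mp hy
    have hh1ne : h1 ≠ 0 := Hne _ hh1
    refine ⟨g ^ j * (h2 * (h1⁻¹ * h0⁻¹)),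
      (memXc _ _).mpr ⟨h2 * (h1⁻¹ * h0⁻¹), Hmul _ hh2 _ (Hmul _ (Hinv _ hh1) _ (Hinv _ hh0)), rfl⟩,
      g ^ (l + (m : ℤ)) * h1⁻¹,
      (memXc _ _).mpr ⟨h1⁻¹, Hinv _ hh1, rfl⟩, ?_⟩
    rw [zsplit, zsplit]
    -- from hxy : g^i*h1 + g^j*h2 = g^l  and hh0eq : g^m*h0 = -1
    have e1 : h1 * h1⁻¹ = 1 := mul_inv_cancel₀ hh1ne
    have e0 : h0 * h0⁻¹ = 1 := mul_inv_cancel₀ hh0ne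
    linear_combination -((g ^ m * h1⁻¹) * hxy) + (g ^ i * g ^ m) * e1 +
      (g ^ j * h2 * h1⁻¹ * h0⁻¹) * hh0eq - (g ^ j * h2 * h1⁻¹ * g ^ m) * e0
  -- periodicity: Xc (s + m + m) = Xc s
  have per : ∀ s : ℤ, Xc p n g (s + (m : ℤ) + (m : ℤ)) = Xc p n g s := by
    intro s
    have hgn : g ^ (s + (m : ℤ) + (m : ℤ)) = g ^ s * g ^ n := by
      rw [zsplit, zsplit, hn, pow_mul', sq, mul_assoc]
    have hgnH : g ^ n ∈ Hpow p n := by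
      have := hgpow 1
      rwa [mul_one] at this
    have hgnne : g ^ n ≠ 0 := Hne _ hgnH
    ext x
    rw [memXc, memXc]
    constructor
    · rintro ⟨h, hh, rfl⟩
      exact ⟨g ^ n * h, Hmul _ hgnH _ hh, by rw [hgn]; ring⟩
    · rintro ⟨h, hh, rfl⟩
      exact ⟨(g ^ n)⁻¹ * h, Hmul _ (Hinv _ hgnH) _ hh, by rw [hgn]; field_simp⟩
  intro i j l
  constructor
  · exact key i j l
  · intro h
    have h2 := key j (l + (m : ℤ)) (i + (m : ℤ)) h
    rw [per i] at h2
    have h3 := key (l + (m : ℤ)) i (j + (m : ℤ)) h2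
    rw [per j, per l] at h3
    exact h3
end

section
/- Suppose k = (p−1)/n is odd. If for every integer i we have X_i ⊄ X_i + X_i (i.e., X_i is not contained in its own sumset), then for every integer i we also have X_i ⊄ X_i + X_{i+m} and X_{i+m} ⊄ X_i + X_{i+m}. -/
open Pointwise

lemma Hpow_one (p n : ℕ) : (1 : ZMod p) ∈ Hpow p n := ⟨1, by simp⟩

lemma Hpow_mul {p n : ℕ} {x y : ZMod p} (hx : x ∈ Hpow p n) (hy : y ∈ Hpow p n) :
    x * y ∈ Hpow p n := by
  obtain ⟨u, hu⟩ := hx; obtain ⟨v, hv⟩ := hy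
  exact ⟨u * v, by rw [← hu, ← hv]; push_cast; ring⟩

lemma Hpow_inv {p n : ℕ} [Fact p.Prime] {x : ZMod p} (hx : x ∈ Hpow p n) :
    x⁻¹ ∈ Hpow p n := by
  obtain ⟨u, hu⟩ := hx
  refine ⟨u⁻¹, ?_⟩
  rw [← hu, Units.val_inv_eq_inv_val, inv_pow]

lemma Hpow_ne_zero {p n : ℕ} [Fact p.Prime] {x : ZMod p} (hx : x ∈ Hpow p n) : x ≠ 0 := by
  obtain ⟨u, hu⟩ := hx
  rw [← hu]
  exact pow_ne_zero _ u.ne_zero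

lemma Hpow_zpow {p n : ℕ} [Fact p.Prime] {g : ZMod p} (hg0 : g ≠ 0) (j : ℤ) :
    g ^ ((n : ℤ) * j) ∈ Hpow p n := by
  have h : IsUnit (g ^ j) := (zpow_ne_zero j hg0).isUnit
  refine ⟨h.unit, ?_⟩
  rw [h.unit_spec, ← zpow_natCast, ← zpow_mul, mul_comm]

/-- If `k = (p-1)/n` is odd and no `X_i` is contained in `X_i + X_i`, then also no `X_i`
and no `X_{i+m}` is contained in `X_i + X_{i+m}`. -/
theorem stmt_6 (p n m k : ℕ) [Fact p.Prime] (hn : n = 2 * m) (hm : 0 < m)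
    (hdvd : n ∣ p - 1) (hk : k = (p - 1) / n) (hkodd : Odd k)
    (g : ZMod p) (hg : IsPrimitiveRoot g (p - 1))
    (hyp : ∀ i : ℤ, ¬ (Xc p n g i ⊆ Xc p n g i + Xc p n g i)) :
    ∀ i : ℤ, ¬ (Xc p n g i ⊆ Xc p n g i + Xc p n g (i + m)) ∧
      ¬ (Xc p n g (i + m) ⊆ Xc p n g i + Xc p n g (i + m)) := by
  have hp : p.Prime := Fact.out
  have hp1 : 1 < p := hp.one_lt
  have hpn : 0 < p - 1 := by omega
  have hgu : IsUnit g := hg.isUnit hpn.ne'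
  have hg0 : g ≠ 0 := hgu.ne_zero
  have hH1 : (1 : ZMod p) ∈ Hpow p n := Hpow_one p n
  obtain ⟨t, htk⟩ := hkodd
  have hk1 : 1 ≤ k := by omega
  have hpk : p - 1 = n * k := by rw [hk, Nat.mul_div_cancel' hdvd]
  -- -1 = g ^ (m*k)
  have hneg : (-1 : ZMod p) = g ^ (m * k) := by
    have h1 : g ^ (m * k) * g ^ (m * k) = 1 := by
      rw [← pow_add]
      have he : m * k + m * k = p - 1 := by rw [hpk, hn]; ring
      rw [he, hg.pow_eq_one]
    rcases mul_self_eq_one_iff.mp h1 with h | h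
    · exfalso
      have h0 : 0 < m * k := Nat.mul_pos hm hk1
      have h2 : p - 1 = 2 * (m * k) := by rw [hpk, hn]; ring
      exact hg.pow_ne_one_of_pos_of_lt h0.ne' (by omega) h
    · exact h.symm
  have hnegz : (-1 : ZMod p) = g ^ ((m * k : ℕ) : ℤ) := by rw [zpow_natCast]; exact hneg
  -- -g^m and -g^(-m) are in H
  have fact1 : -(g ^ (m : ℤ)) ∈ Hpow p n := by
    have he : ((n : ℤ) * (t + 1)) = ((m * k : ℕ) : ℤ) + (m : ℤ) := by
      push_cast [hn, htk]; ring
    have hx : g ^ ((n : ℤ) * (t + 1)) = -(g ^ (m : ℤ)) := by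
      rw [he, zpow_add₀ hg0, ← hnegz, neg_one_mul]
    rw [← hx]; exact Hpow_zpow hg0 _
  have fact2 : -(g ^ (-(m : ℤ))) ∈ Hpow p n := by
    have he : ((n : ℤ) * t) = ((m * k : ℕ) : ℤ) + (-(m : ℤ)) := by
      push_cast [hn, htk]; ring
    have hx : g ^ ((n : ℤ) * t) = -(g ^ (-(m : ℤ))) := by
      rw [he, zpow_add₀ hg0, ← hnegz, neg_one_mul]
    rw [← hx]; exact Hpow_zpow hg0 _
  -- absorption
  have habsorb : ∀ a : ZMod p, a ∈ Hpow p n → a ∈ Hpow p n + Hpow p n →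
      Hpow p n ⊆ Hpow p n + Hpow p n := by
    intro a ha hab x hx
    obtain ⟨b, hb, c, hc, hbc⟩ := Set.mem_add.mp hab
    have ha0 : a ≠ 0 := Hpow_ne_zero ha
    refine Set.mem_add.mpr ⟨x * a⁻¹ * b, Hpow_mul (Hpow_mul hx (Hpow_inv ha)) hb,
      x * a⁻¹ * c, Hpow_mul (Hpow_mul hx (Hpow_inv ha)) hc, ?_⟩
    field_simp
    linear_combination x * hbc
  -- hypothesis at 0
  have hX0 : Xc p n g 0 = Hpow p n := by
    unfold Xc; rw [zpow_zero, one_smul]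
  have hcontra : ¬ (Hpow p n ⊆ Hpow p n + Hpow p n) := by
    have := hyp 0
    rwa [hX0] at this
  intro i
  constructor
  · intro hsub
    have hgi : (g : ZMod p) ^ i ∈ Xc p n g i :=
      Set.mem_smul_set.mpr ⟨1, hH1, by rw [smul_eq_mul, mul_one]⟩
    obtain ⟨a, ha, b, hb, hab⟩ := Set.mem_add.mp (hsub hgi)
    obtain ⟨h1, hh1, hah⟩ := Set.mem_smul_set.mp ha
    obtain ⟨h2, hh2, hbh⟩ := Set.mem_smul_set.mp hb
    rw [smul_eq_mul] at hah hbh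
    have hgm : g ^ (i + (m : ℤ)) = g ^ i * g ^ (m : ℤ) := zpow_add₀ hg0 _ _
    have h1e : (1 : ZMod p) = h1 + g ^ (m : ℤ) * h2 := by
      apply mul_left_cancel₀ (zpow_ne_zero i hg0)
      rw [mul_one]
      calc g ^ i = a + b := hab.symm
        _ = g ^ i * h1 + g ^ (i + (m : ℤ)) * h2 := by rw [hah, hbh]
        _ = g ^ i * (h1 + g ^ (m : ℤ) * h2) := by rw [hgm]; ring
    have hkey : h1 = 1 + (-(g ^ (m : ℤ))) * h2 := by linear_combination -h1e
    have hmem : h1 ∈ Hpow p n + Hpow p n :=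
      Set.mem_add.mpr ⟨1, hH1, (-(g ^ (m : ℤ))) * h2, Hpow_mul fact1 hh2, hkey.symm⟩
    exact hcontra (habsorb h1 hh1 hmem)
  · intro hsub
    have hgi : (g : ZMod p) ^ (i + (m : ℤ)) ∈ Xc p n g (i + m) :=
      Set.mem_smul_set.mpr ⟨1, hH1, by rw [smul_eq_mul, mul_one]⟩
    obtain ⟨a, ha, b, hb, hab⟩ := Set.mem_add.mp (hsub hgi)
    obtain ⟨h1, hh1, hah⟩ := Set.mem_smul_set.mp ha
    obtain ⟨h2, hh2, hbh⟩ := Set.mem_smul_set.mp hb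
    rw [smul_eq_mul] at hah hbh
    have hgm : g ^ (i + (m : ℤ)) * g ^ (-(m : ℤ)) = g ^ i := by
      rw [← zpow_add₀ hg0]; ring_nf
    have h1e : (1 : ZMod p) = g ^ (-(m : ℤ)) * h1 + h2 := by
      apply mul_left_cancel₀ (zpow_ne_zero (i + (m : ℤ)) hg0)
      rw [mul_one]
      calc g ^ (i + (m : ℤ)) = a + b := hab.symm
        _ = g ^ i * h1 + g ^ (i + (m : ℤ)) * h2 := by rw [hah, hbh]
        _ = g ^ (i + (m : ℤ)) * (g ^ (-(m : ℤ)) * h1 + h2) := by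
            rw [mul_add, ← mul_assoc, hgm]
    have hkey : h2 = 1 + (-(g ^ (-(m : ℤ)))) * h1 := by linear_combination -h1e
    have hmem : h2 ∈ Hpow p n + Hpow p n :=
      Set.mem_add.mpr ⟨1, hH1, (-(g ^ (-(m : ℤ)))) * h1, Hpow_mul fact2 hh1, hkey.symm⟩
    exact hcontra (habsorb h2 hh2 hmem)
end

section
/- Let p be a prime, n = 2m a positive even integer with n ∣ p−1 and k = (p−1)/n odd, g a primitive root modulo p, and X_i = g^i·H for H the subgroup of n-th power residues, indices mod n. Suppose the X_i form a Directed Ramsey system: (1) for all i, X_i + X_i = ⋃_{j ≠ i} X_j; (2) for all i, X_i + X_{i+m} = {0} ∪ ⋃_{j ∉ {i, i+m}} X_j; (3) for all i, j with i ≠ j and j ≠ i+m, X_i + X_j = 𝔽_p ∖ {0}. Define R_i = {(x,y) ∈ 𝔽_p × 𝔽_p : x − y ∈ X_i} for 0 ≤ i < n and Id = {(x,x) : x ∈ 𝔽_p}. Then Id, R_0, …, R_{n−1} partition 𝔽_p × 𝔽_p, R_i^{−1} = R_{i+m} for all i (indices mod n), R_i ∘ R_i = (𝔽_p × 𝔽_p)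 ∖ (R_i ∪ Id) for all i, R_i ∘ R_{i+m} = (𝔽_p × 𝔽_p) ∖ (R_i ∪ R_{i+m}) for all i, and R_i ∘ R_j = (𝔽_p × 𝔽_p) ∖ Id for all i, j with i ≠ j and j ≠ i+m (indices mod n). -/
open Pointwise

/-- The identity relation on `𝔽_p`. -/
def IdRel (p : ℕ) : Set (ZMod p × ZMod p) := {q | q.1 = q.2}

/-- The relation `{(x,y) : x - y ∈ X}` on `𝔽_p` determined by a set `X ⊆ 𝔽_p`. -/
def diffRel (p : ℕ) (X : Set (ZMod p)) : Set (ZMod p × ZMod p) := {q | q.1 - q.2 ∈ X}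

/-- Relational composition `R ∘ S`. -/
def relComp (p : ℕ) (R S : Set (ZMod p × ZMod p)) : Set (ZMod p × ZMod p) :=
  {q | ∃ y, (q.1, y) ∈ R ∧ (y, q.2) ∈ S}

/-- Relational inverse `R⁻¹`. -/
def relInv (p : ℕ) (R : Set (ZMod p × ZMod p)) : Set (ZMod p × ZMod p) :=
  {q | (q.2, q.1) ∈ R}

/-- A Directed Ramsey system of cosets yields a Directed Ramsey algebra of relations. -/
theorem stmt_8 (p n m k : ℕ) [Fact p.Prime] (hn : n = 2 * m) (hm : 0 < m)
    (hdvd : n ∣ p - 1) (hk : k = (p - 1) / n) (hkodd : Odd k)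
    (g : ZMod p) (hg : IsPrimitiveRoot g (p - 1))
    (h1 : ∀ i : ℤ, Xc p n g i + Xc p n g i =
      ⋃ j ∈ {j : ℤ | (j : ZMod n) ≠ (i : ZMod n)}, Xc p n g j)
    (h2 : ∀ i : ℤ, Xc p n g i + Xc p n g (i + m) =
      {(0 : ZMod p)} ∪ ⋃ j ∈ {j : ℤ | (j : ZMod n) ≠ (i : ZMod n) ∧
        (j : ZMod n) ≠ ((i + m : ℤ) : ZMod n)}, Xc p n g j)
    (h3 : ∀ i j : ℤ, (j : ZMod n) ≠ (i : ZMod n) → (j : ZMod n) ≠ ((i + m : ℤ) : ZMod n) →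
      Xc p n g i + Xc p n g j = {(0 : ZMod p)}ᶜ) :
    (∀ q : ZMod p × ZMod p, q ∈ IdRel p ∨ ∃ i : ℤ, q ∈ diffRel p (Xc p n g i)) ∧
    (∀ i : ℤ, Disjoint (IdRel p) (diffRel p (Xc p n g i))) ∧
    (∀ i j : ℤ, (j : ZMod n) ≠ (i : ZMod n) →
      Disjoint (diffRel p (Xc p n g i)) (diffRel p (Xc p n g j))) ∧
    (∀ i : ℤ, relInv p (diffRel p (Xc p n g i)) = diffRel p (Xc p n g (i + m))) ∧
    (∀ i : ℤ, relComp p (diffRel p (Xc p n g i)) (diffRel p (Xc p n g i)) =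
      (diffRel p (Xc p n g i) ∪ IdRel p)ᶜ) ∧
    (∀ i : ℤ, relComp p (diffRel p (Xc p n g i)) (diffRel p (Xc p n g (i + m))) =
      (diffRel p (Xc p n g i) ∪ diffRel p (Xc p n g (i + m)))ᶜ) ∧
    (∀ i j : ℤ, (j : ZMod n) ≠ (i : ZMod n) → (j : ZMod n) ≠ ((i + m : ℤ) : ZMod n) →
      relComp p (diffRel p (Xc p n g i)) (diffRel p (Xc p n g j)) = (IdRel p)ᶜ) := by
  classical
  have hn0 : 0 < n := by omega
  have hpn : p - 1 = n * k := by rw [hk, Nat.mul_div_cancel' hdvd]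
  have hk1 : 0 < k := hkodd.pos
  have h01 : 0 < p - 1 := by
    have := Nat.mul_pos hn0 hk1; omega
  -- the primitive root as a unit
  have hu : IsUnit g := hg.isUnit h01.ne'
  set gu := hu.unit with hgu
  have hval : (gu : ZMod p) = g := rfl
  have hord : orderOf gu = p - 1 := (hg.isUnit_unit h01.ne').eq_orderOf.symm
  have hsurj : ∀ u : (ZMod p)ˣ, ∃ t : ℤ, gu ^ t = u := by
    intro u
    have hcard : Nat.card (Subgroup.zpowers gu) = Nat.card (ZMod p)ˣ := by
      rw [Nat.card_zpowers, hord, Nat.card_eq_fintype_card, ZMod.card_units]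
    have htop := Subgroup.eq_top_of_card_eq _ hcard
    have : u ∈ Subgroup.zpowers gu := htop ▸ Subgroup.mem_top u
    exact Subgroup.mem_zpowers_iff.mp this
  have hzc : ∀ t : ℤ, ((gu ^ t : (ZMod p)ˣ) : ZMod p) = g ^ t := fun t =>
    Units.val_zpow_eq_zpow_val gu t
  -- membership characterization
  have hmem : ∀ (i : ℤ) (x : ZMod p), x ∈ Xc p n g i ↔
      ∃ t : ℤ, ((gu ^ t : (ZMod p)ˣ) : ZMod p) = x ∧ (t : ZMod n) = (i : ZMod n) := by
    intro i x
    simp only [Xc, Set.mem_smul_set, Hpow, Set.mem_setOf_eq]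
    constructor
    · rintro ⟨y, ⟨u, rfl⟩, rfl⟩
      obtain ⟨s, rfl⟩ := hsurj u
      refine ⟨i + s * n, ?_, by push_cast; simp⟩
      have he : (gu ^ (i + s * n) : (ZMod p)ˣ) = gu ^ i * (gu ^ s) ^ (n : ℕ) := by
        rw [← zpow_natCast (gu ^ s) n, ← zpow_mul, ← zpow_add]
      rw [he, Units.val_mul, smul_eq_mul, hzc, Units.val_pow_eq_pow_val]
    · rintro ⟨t, rfl, ht⟩
      have hd : (n : ℤ) ∣ t - i :=
        Int.ModEq.dvd ((ZMod.intCast_eq_intCast_iff _ _ _).mp ht).symm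
      obtain ⟨s, hs⟩ := hd
      refine ⟨((gu ^ s : (ZMod p)ˣ) : ZMod p) ^ n, ⟨gu ^ s, rfl⟩, ?_⟩
      have he : (gu ^ t : (ZMod p)ˣ) = gu ^ i * (gu ^ s) ^ (n : ℕ) := by
        rw [← zpow_natCast (gu ^ s) n, ← zpow_mul, ← zpow_add]
        congr 1
        linarith
      rw [he, Units.val_mul, smul_eq_mul, hzc, Units.val_pow_eq_pow_val, hzc i, hzc s]
  have h0X : ∀ i : ℤ, (0 : ZMod p) ∉ Xc p n g i := by
    intro i h
    obtain ⟨t, ht, -⟩ := (hmem i 0).mp h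
    exact (gu ^ t).ne_zero ht
  have hinj : ∀ t t' : ℤ, (gu ^ t : (ZMod p)ˣ) = gu ^ t' →
      (t : ZMod n) = (t' : ZMod n) := by
    intro t t' h
    have h1' : (gu : (ZMod p)ˣ) ^ (t - t') = 1 := by
      rw [zpow_sub, h, mul_inv_cancel]
    have hdv : ((p - 1 : ℕ) : ℤ) ∣ t - t' := by
      rw [← hord]; exact orderOf_dvd_iff_zpow_eq_one.mpr h1'
    have hdn : (n : ℤ) ∣ t - t' := dvd_trans (Int.natCast_dvd_natCast.mpr hdvd) hdv
    rw [ZMod.intCast_eq_intCast_iff]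
    exact Int.ModEq.symm (Int.modEq_iff_dvd.mpr hdn)
  have hdisj : ∀ i j : ℤ, (i : ZMod n) ≠ (j : ZMod n) →
      ∀ x : ZMod p, x ∈ Xc p n g i → x ∈ Xc p n g j → False := by
    intro i j hij x hxi hxj
    obtain ⟨t, ht, hti⟩ := (hmem i x).mp hxi
    obtain ⟨t', ht', htj⟩ := (hmem j x).mp hxj
    have : (gu ^ t : (ZMod p)ˣ) = gu ^ t' := Units.ext (by rw [ht, ht'])
    exact hij (hti ▸ htj ▸ hinj t t' this)
  have hXeq : ∀ i j : ℤ, (i : ZMod n) = (j : ZMod n) → Xc p n g i = Xc p n g j := by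
    intro i j hij
    ext x
    rw [hmem, hmem, hij]
  have hcover : ∀ x : ZMod p, x ≠ 0 → ∃ t : ℤ, x ∈ Xc p n g t := by
    intro x hx
    obtain ⟨t, ht⟩ := hsurj (isUnit_iff_ne_zero.mpr hx).unit
    exact ⟨t, (hmem t x).mpr ⟨t, by rw [ht]; rfl, rfl⟩⟩
  -- -1 = g ^ (m * k)
  have hneg1 : ((gu ^ ((m : ℤ) * k) : (ZMod p)ˣ) : ZMod p) = -1 := by
    have h2e : p - 1 = 2 * (m * k) := by rw [hpn, hn]; ring
    have hv2 : (g ^ (m * k : ℕ)) ^ 2 = 1 := by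
      rw [← pow_mul]
      have : m * k * 2 = p - 1 := by omega
      rw [this, hg.pow_eq_one]
    have hvne : g ^ (m * k : ℕ) ≠ 1 := by
      apply hg.pow_ne_one_of_pos_of_lt (Nat.mul_pos hm hk1).ne'
      have := Nat.mul_pos hm hk1; omega
    have : (g ^ (m * k : ℕ) - 1) * (g ^ (m * k : ℕ) + 1) = 0 := by linear_combination hv2
    rcases mul_eq_zero.mp this with h | h
    · exact absurd (sub_eq_zero.mp h) hvne
    · rw [hzc]
      have : ((m : ℤ) * k) = ((m * k : ℕ) : ℤ) := by push_cast; ring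
      rw [this, zpow_natCast]
      exact eq_neg_of_add_eq_zero_left h
  -- m*k ≡ m mod n
  have hmkm : (((m : ℤ) * k : ℤ) : ZMod n) = ((m : ℤ) : ZMod n) := by
    rw [ZMod.intCast_eq_intCast_iff]
    refine Int.ModEq.symm (Int.modEq_iff_dvd.mpr ?_)
    obtain ⟨l, hl⟩ := hkodd
    exact ⟨l, by push_cast [hl, hn]; ring⟩
  -- negation shifts the index by m
  have hnegXc : ∀ (i : ℤ) (x : ZMod p), x ∈ Xc p n g i → -x ∈ Xc p n g (i + m) := by
    intro i x hx
    obtain ⟨t, ht, hti⟩ := (hmem i x).mp hx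
    refine (hmem _ _).mpr ⟨t + (m : ℤ) * k, ?_, ?_⟩
    · rw [zpow_add, Units.val_mul, hneg1, ht]; ring
    · push_cast
      push_cast at hti hmkm
      rw [hti, hmkm]
  have h2m : ∀ i : ℤ, ((i + (m : ℤ) + (m : ℤ) : ℤ) : ZMod n) = (i : ZMod n) := by
    intro i
    rw [ZMod.intCast_eq_intCast_iff]
    exact Int.modEq_iff_dvd.mpr ⟨-1, by push_cast [hn]; ring⟩
  -- composition of difference relations
  have hcomp : ∀ X Y : Set (ZMod p),
      relComp p (diffRel p X) (diffRel p Y) = diffRel p (X + Y) := by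
    intro X Y
    ext q
    simp only [relComp, diffRel, Set.mem_setOf_eq, Set.mem_add]
    constructor
    · rintro ⟨y, hx, hy⟩
      exact ⟨q.1 - y, hx, y - q.2, hy, by ring⟩
    · rintro ⟨a, ha, b, hb, hab⟩
      refine ⟨q.1 - a, by simpa using ha, ?_⟩
      have he : q.1 - a - q.2 = b := by linear_combination -hab
      rw [he]; exact hb
  refine ⟨?_, ?_, ?_, ?_, ?_, ?_, ?_⟩
  · -- partition: cover
    intro q
    by_cases h : q.1 = q.2
    · exact Or.inl h
    · obtain ⟨t, ht⟩ := hcover (q.1 - q.2) (sub_ne_zero.mpr h)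
      exact Or.inr ⟨t, ht⟩
  · -- Id disjoint from R_i
    intro i
    rw [Set.disjoint_left]
    intro q hq hq'
    have : q.1 - q.2 = 0 := sub_eq_zero.mpr hq
    rw [diffRel, Set.mem_setOf_eq, this] at hq'
    exact h0X i hq'
  · -- R_i disjoint from R_j
    intro i j hji
    rw [Set.disjoint_left]
    intro q hq hq'
    exact hdisj i j (Ne.symm hji) _ hq hq'
  · -- inverse
    intro i
    ext q
    simp only [relInv, diffRel, Set.mem_setOf_eq]
    constructor
    · intro h
      have := hnegXc i _ h
      rwa [neg_sub] at this
    · intro h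
      have := hnegXc (i + m) _ h
      rwa [neg_sub, hXeq _ i (h2m i)] at this
  · -- R_i ∘ R_i
    intro i
    rw [hcomp, h1 i]
    ext q
    simp only [diffRel, Set.mem_setOf_eq, Set.mem_iUnion, Set.mem_compl_iff,
      Set.mem_union, IdRel, exists_prop]
    constructor
    · rintro ⟨j, hj, hmj⟩
      push_neg
      refine ⟨fun hc => hdisj j i hj _ hmj hc, fun h => ?_⟩
      rw [sub_eq_zero.mpr h] at hmj
      exact h0X j hmj
    · intro h
      push_neg at h
      obtain ⟨hni, hne⟩ := h
      obtain ⟨t, ht⟩ := hcover _ (sub_ne_zero.mpr hne)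
      exact ⟨t, fun hc => hni (hXeq t i hc ▸ ht), ht⟩
  · -- R_i ∘ R_{i+m}
    intro i
    rw [hcomp, h2 i]
    ext q
    simp only [diffRel, Set.mem_setOf_eq, Set.mem_union, Set.mem_singleton_iff,
      Set.mem_iUnion, Set.mem_compl_iff, exists_prop]
    constructor
    · rintro (h0 | ⟨j, ⟨hji, hjim⟩, hmj⟩)
      · push_neg
        rw [h0]
        exact ⟨h0X i, h0X (i + (m : ℤ))⟩
      · push_neg
        exact ⟨fun hc => hdisj j i hji _ hmj hc, fun hc => hdisj j (i + m) hjim _ hmj hc⟩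
    · intro h
      push_neg at h
      obtain ⟨hni, hnim⟩ := h
      by_cases hz : q.1 - q.2 = 0
      · exact Or.inl hz
      · obtain ⟨t, ht⟩ := hcover _ hz
        exact Or.inr ⟨t, ⟨fun hc => hni (hXeq t i hc ▸ ht),
          fun hc => hnim (hXeq t (i + m) hc ▸ ht)⟩, ht⟩
  · -- R_i ∘ R_j
    intro i j hji hjim
    rw [hcomp, h3 i j hji hjim]
    ext q
    simp only [diffRel, Set.mem_setOf_eq, Set.mem_compl_iff, Set.mem_singleton_iff,
      IdRel, sub_eq_zero]
end

section
/- There exists a primitive root g modulo 29 such that the cosets X_i = g^i·H (0 ≤ i < 4, indices mod 4) of the subgroup H of 4th-power residues in 𝔽_29^× form a 2-color Directed Anti-Ramsey algebra, i.e., with m = 2: (1) for all i, X_i + X_i = ⋃_{j ≠ i+2} X_j; (2) for all i, X_i + X_{i+2} = 𝔽_29; (3) for all i, j with i ≠ j and j ≠ i+2, X_i + X_j = 𝔽_29 ∖ {0}. -/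
open Pointwise

instance : Fact (Nat.Prime 29) := ⟨by norm_num⟩

/-- Explicit lists of the four cosets. -/
def HF : ZMod 4 → Finset (ZMod 29) := fun c =>
  if c = 0 then {1,7,16,20,23,24,25}
  else if c = 1 then {2,3,11,14,17,19,21}
  else if c = 2 then {4,5,6,9,13,22,28}
  else {8,10,12,15,18,26,27}

/-- `2` as a unit of `ZMod 29`. -/
def u2 : (ZMod 29)ˣ := ⟨2, 15, by decide, by decide⟩

theorem hHF : Hpow 29 4 = ↑(HF 0) := by
  ext x
  simp only [Hpow, Set.mem_setOf_eq, Finset.coe_insert, Set.mem_insert_iff, Finset.coe_singleton,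
    Set.mem_singleton_iff, HF, if_pos rfl]
  revert x
  decide

theorem scale (v : (ZMod 29)ˣ) : ((v ^ 4 : (ZMod 29)ˣ) : ZMod 29) • Hpow 29 4 = Hpow 29 4 := by
  ext x
  simp only [Set.mem_smul_set, Hpow, Set.mem_setOf_eq, smul_eq_mul]
  constructor
  · rintro ⟨y, ⟨w, rfl⟩, rfl⟩
    exact ⟨v * w, by push_cast; ring⟩
  · rintro ⟨w, rfl⟩
    refine ⟨((v⁻¹ * w : (ZMod 29)ˣ) : ZMod 29) ^ 4, ⟨v⁻¹ * w, rfl⟩, ?_⟩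
    have h : v ^ 4 * (v⁻¹ * w) ^ 4 = w ^ 4 := by
      rw [mul_pow, ← mul_assoc, ← mul_pow, mul_inv_cancel, one_pow, one_mul]
    calc ((v ^ 4 : (ZMod 29)ˣ) : ZMod 29) * ((v⁻¹ * w : (ZMod 29)ˣ) : ZMod 29) ^ 4
        = (((v ^ 4) * (v⁻¹ * w) ^ 4 : (ZMod 29)ˣ) : ZMod 29) := by push_cast; ring
      _ = _ := by rw [h]; push_cast; ring

theorem L3 (i : ℤ) : Xc 29 4 2 i = ↑(HF (i : ZMod 4)) := by
  have h2 : (2 : ZMod 29) ^ i = ((u2 ^ i : (ZMod 29)ˣ) : ZMod 29) := by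
    rw [Units.val_zpow_eq_zpow_val]; rfl
  obtain ⟨q, r, hr0, hr4, hi⟩ : ∃ q r : ℤ, 0 ≤ r ∧ r < 4 ∧ i = 4 * q + r :=
    ⟨i / 4, i % 4, Int.emod_nonneg i (by norm_num), Int.emod_lt_of_pos i (by norm_num), by omega⟩
  subst hi
  have hsplit : u2 ^ (4 * q + r) = u2 ^ r * (u2 ^ q) ^ (4 : ℕ) := by
    have h : (4 : ℤ) * q + r = r + q * ((4 : ℕ) : ℤ) := by push_cast; ring
    rw [h, zpow_add, zpow_mul, zpow_natCast]
  have hcast : ((4 * q + r : ℤ) : ZMod 4) = (r : ZMod 4) := by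
    push_cast
    rw [show (4 : ZMod 4) = 0 from rfl, zero_mul, zero_add]
  rw [Xc, h2, hsplit, hcast, Units.val_mul, mul_smul, scale (u2 ^ q)]
  interval_cases r
  · rw [zpow_zero, Units.val_one, one_smul, hHF]
    norm_num
  · rw [zpow_one, hHF, show ((1 : ℤ) : ZMod 4) = 1 by norm_num, ← Finset.coe_smul_finset]
    exact Finset.coe_inj.mpr (by decide)
  · rw [hHF, show ((2 : ℤ) : ZMod 4) = 2 by norm_num, ← Finset.coe_smul_finset,
      show u2 ^ (2 : ℤ) = u2 ^ (2 : ℕ) from zpow_natCast u2 2 ▸ rfl]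
    exact Finset.coe_inj.mpr (by decide)
  · rw [hHF, show ((3 : ℤ) : ZMod 4) = 3 by norm_num, ← Finset.coe_smul_finset,
      show u2 ^ (3 : ℤ) = u2 ^ (3 : ℕ) from zpow_natCast u2 3 ▸ rfl]
    exact Finset.coe_inj.mpr (by decide)

theorem prim : IsPrimitiveRoot (2 : ZMod 29) 28 := by
  have h : orderOf (2 : ZMod 29) = 28 := by
    apply orderOf_eq_of_pow_and_pow_div_prime (by norm_num) (by decide)
    intro p hp hd
    have hle := Nat.le_of_dvd (by norm_num) hd
    have h27 : p = 2 ∨ p = 7 := by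
      interval_cases p <;> revert hp hd <;> decide
    rcases h27 with rfl | rfl <;> decide
  exact h ▸ IsPrimitiveRoot.orderOf 2

theorem key1 : ∀ c : ZMod 4,
    HF c + HF c = (Finset.univ.filter (· ≠ c + 2)).biUnion HF := by decide

theorem key2 : ∀ c : ZMod 4, HF c + HF (c + 2) = Finset.univ := by decide

theorem key3 : ∀ c d : ZMod 4, d ≠ c → d ≠ c + 2 →
    HF c + HF d = ({(0 : ZMod 29)} : Finset (ZMod 29))ᶜ := by decide

/-- The cosets of the index-4 subgroup of `𝔽_29ˣ` form a 2-color Directed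
Anti-Ramsey algebra. -/
theorem stmt_10 : ∃ g : ZMod 29, IsPrimitiveRoot g 28 ∧
    (∀ i : ℤ, Xc 29 4 g i + Xc 29 4 g i =
      ⋃ j ∈ {j : ℤ | (j : ZMod 4) ≠ ((i + 2 : ℤ) : ZMod 4)}, Xc 29 4 g j) ∧
    (∀ i : ℤ, Xc 29 4 g i + Xc 29 4 g (i + 2) = Set.univ) ∧
    (∀ i j : ℤ, (j : ZMod 4) ≠ (i : ZMod 4) → (j : ZMod 4) ≠ ((i + 2 : ℤ) : ZMod 4) →
      Xc 29 4 g i + Xc 29 4 g j = {(0 : ZMod 29)}ᶜ) := by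
  refine ⟨2, prim, ?_, ?_, ?_⟩
  · intro i
    have hc : ((i + 2 : ℤ) : ZMod 4) = (i : ZMod 4) + 2 := by push_cast; ring
    simp only [L3, hc, ← Finset.coe_add, key1]
    ext x
    simp only [Finset.coe_biUnion, Finset.coe_filter, Finset.mem_univ, true_and,
      Set.mem_iUnion, Set.mem_setOf_eq, Finset.mem_coe, exists_prop]
    constructor
    · rintro ⟨c, hc1, hc2⟩
      obtain ⟨j, rfl⟩ := ZMod.intCast_surjective (n := 4) c
      exact ⟨j, hc1, hc2⟩
    · rintro ⟨j, hj1, hj2⟩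
      exact ⟨(j : ZMod 4), hj1, hj2⟩
  · intro i
    have hc : ((i + 2 : ℤ) : ZMod 4) = (i : ZMod 4) + 2 := by push_cast; ring
    rw [L3, L3, hc, ← Finset.coe_add, key2, Finset.coe_univ]
  · intro i j h1 h2
    have hc : ((i + 2 : ℤ) : ZMod 4) = (i : ZMod 4) + 2 := by push_cast; ring
    rw [L3, L3, ← Finset.coe_add, key3 _ _ h1 (hc ▸ h2), Finset.coe_compl,
      Finset.coe_singleton]
end
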